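/- Let G be a finite simple graph with at least one vertex such that |E(G)| < 2|V(G)|. Then G contains a vertex of degree at most 2, or an edge uv such that deg(u) = 3 and deg(v) ≤ 6. Equivalently (contrapositive): if every vertex of G has degree at least 3 and no edge of G joins a vertex of degree exactly 3 to a vertex of degree at most 6, then the sum of the degrees of G is at least 4|V(G)|, i.e. |E(G)| ≥ 2|V(G)|. -/
import Mathlib


open SimpleGraph Finset

theorem low_degree_vertex_or_edge
    {V : Type*} [Fintype V] [DecidableEq V] (G : SimpleGraph V) [DecidableRel G.Adj]
    (hV : 0 < Fintype.card V)
    (hE : G.edgeFinset.card < 2 * Fintype.card V) :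
    (∃ v : V, G.degree v ≤ 2) ∨
    (∃ u v : V, G.Adj u v ∧ G.degree u = 3 ∧ G.degree v ≤ 6) := by
  by_contra hcon
  push_neg at hcon
  obtain ⟨h1, h2⟩ := hcon
  set t : V → ℕ := fun v => ((G.neighborFinset v).filter (fun u => G.degree u = 3)).card
    with ht
  have key : ∀ v, 12 + t v ≤ 3 * G.degree v + (if G.degree v = 3 then 3 else 0) := by
    intro v
    by_cases h3 : G.degree v = 3
    · have ht0 : t v = 0 := by
        simp only [ht, Finset.card_eq_zero, Finset.filter_eq_empty_iff]
        intro u hu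
        rw [mem_neighborFinset] at hu
        have := h2 v u hu h3
        omega
      rw [ht0, h3]; simp
    · by_cases h7 : 7 ≤ G.degree v
      · have htle : t v ≤ G.degree v := by
          calc t v ≤ (G.neighborFinset v).card := Finset.card_filter_le _ _
          _ = G.degree v := G.card_neighborFinset_eq_degree v
        omega
      · have ht0 : t v = 0 := by
          simp only [ht, Finset.card_eq_zero, Finset.filter_eq_empty_iff]
          intro u hu hdu
          rw [mem_neighborFinset] at hu
          have := h2 u v hu.symm hdu
          omega
        have := h1 v
        omega
  have hsum : ∑ v, t v = ∑ v, (if G.degree v = 3 then 3 else 0) := by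
    have h1' : ∀ v, t v = ∑ u, (if G.Adj v u ∧ G.degree u = 3 then 1 else 0) := by
      intro v
      simp only [ht]
      have he : (G.neighborFinset v).filter (fun u => G.degree u = 3) =
          Finset.univ.filter (fun u => G.Adj v u ∧ G.degree u = 3) := by
        ext u; simp [mem_neighborFinset]
      rw [he, Finset.card_filter]
    calc ∑ v, t v = ∑ v, ∑ u, (if G.Adj v u ∧ G.degree u = 3 then 1 else 0) := by
          exact Finset.sum_congr rfl fun v _ => h1' v
      _ = ∑ u, ∑ v, (if G.Adj v u ∧ G.degree u = 3 then 1 else 0) := Finset.sum_comm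
      _ = ∑ u, (if G.degree u = 3 then 3 else 0) := by
          refine Finset.sum_congr rfl fun u _ => ?_
          by_cases hd : G.degree u = 3
          · simp only [hd, and_true, if_pos]
            have : ∑ v, (if G.Adj v u then 1 else 0) = G.degree u := by
              rw [← Finset.card_filter, ← G.card_neighborFinset_eq_degree u]
              congr 1
              ext v
              simp [mem_neighborFinset, adj_comm]
            rw [this, hd]
          · simp [hd]
  have hdeg : ∑ v, G.degree v = 2 * G.edgeFinset.card :=
    G.sum_degrees_eq_twice_card_edges
  have htot : 12 * Fintype.card V + ∑ v, t v ≤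
      3 * ∑ v, G.degree v + ∑ v, (if G.degree v = 3 then 3 else 0) := by
    calc 12 * Fintype.card V + ∑ v, t v = ∑ v : V, (12 + t v) := by
          rw [Finset.sum_add_distrib, Finset.sum_const, Finset.card_univ, smul_eq_mul, Nat.mul_comm]
      _ ≤ ∑ v, (3 * G.degree v + (if G.degree v = 3 then 3 else 0)) :=
          Finset.sum_le_sum fun v _ => key v
      _ = 3 * ∑ v, G.degree v + ∑ v, (if G.degree v = 3 then 3 else 0) := by
          rw [Finset.sum_add_distrib, Finset.mul_sum]
  rw [hsum] at htot
  omega
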